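/- Let φ : ℝⁿ → ℝ be continuous with φ(ξ) ≥ c₀ |ξ|^s on a ball V = B(0, ε) (c₀ > 0, s > 0), let a : ℝⁿ → ℂ be bounded, and let α be a multi-index. Then there exists C such that for all t ≥ 0 and all bounded measurable g : ℝⁿ → ℂ, ∫_V e^{-φ(ξ) t} |ξ^α| |a(ξ)| |g(ξ)| dξ ≤ C (1+t)^{-(n+|α|)/s} ‖g‖_{L^∞}. -/

import Mathlib

open MeasureTheory Metric Filter

lemma aux_cont {n : ℕ} (c₀ s t : ℝ) (hs : 0 < s) (k : ℕ) :
    Continuous (fun ξ : EuclideanSpace ℝ (Fin n) =>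
      Real.exp (-(c₀ * ‖ξ‖ ^ s) * t) * ‖ξ‖ ^ k) := by
  have hns : Continuous fun ξ : EuclideanSpace ℝ (Fin n) => ‖ξ‖ ^ s :=
    continuous_norm.rpow_const (fun x => Or.inr hs.le)
  exact (Real.continuous_exp.comp (((continuous_const.mul hns).neg).mul continuous_const)).mul
    (continuous_norm.pow k)

lemma aux_tendsto (n k : ℕ) (c₀ s : ℝ) (hc₀ : 0 < c₀) (hs : 0 < s) :
    Tendsto (fun u : ℝ => Real.exp (-(c₀ * u ^ s)) * (u ^ k * (1 + u) ^ (n + 1)))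
      atTop (nhds 0) := by
  set q : ℝ := ((n + 1 + k : ℕ) : ℝ) / s with hq
  have T1 : Tendsto (fun x : ℝ => x ^ q * Real.exp (-c₀ * x)) atTop (nhds 0) :=
    tendsto_rpow_mul_exp_neg_mul_atTop_nhds_zero q c₀ hc₀
  have T2 : Tendsto (fun u : ℝ => (u ^ s) ^ q * Real.exp (-c₀ * u ^ s)) atTop (nhds 0) :=
    T1.comp (tendsto_rpow_atTop hs)
  have T3 : Tendsto (fun u : ℝ =>
      (2 : ℝ) ^ (n + 1 + k) * ((u ^ s) ^ q * Real.exp (-c₀ * u ^ s))) atTop (nhds 0) := by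
    simpa using T2.const_mul ((2 : ℝ) ^ (n + 1 + k))
  apply squeeze_zero' ?_ ?_ T3
  · filter_upwards [eventually_ge_atTop (0 : ℝ)] with u hu
    positivity
  · filter_upwards [eventually_ge_atTop (1 : ℝ)] with u hu
    have hu0 : (0 : ℝ) < u := lt_of_lt_of_le one_pos hu
    have hpow : (u ^ s) ^ q = u ^ (n + 1 + k) := by
      rw [← Real.rpow_mul hu0.le, mul_div_cancel₀ _ hs.ne', Real.rpow_natCast]
    have h1 : u ^ k * (1 + u) ^ (n + 1) ≤ (2 : ℝ) ^ (n + 1 + k) * u ^ (n + 1 + k) := by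
      calc u ^ k * (1 + u) ^ (n + 1) ≤ u ^ k * (2 * u) ^ (n + 1) := by
            have h2 : (1 + u) ≤ 2 * u := by linarith
            have := pow_le_pow_left₀ (by linarith : (0:ℝ) ≤ 1 + u) h2 (n + 1)
            exact mul_le_mul_of_nonneg_left this (by positivity)
        _ = 2 ^ (n + 1) * u ^ (n + 1 + k) := by rw [mul_pow, pow_add]; ring
        _ ≤ (2 : ℝ) ^ (n + 1 + k) * u ^ (n + 1 + k) := by
            have : (2:ℝ) ^ (n + 1) ≤ 2 ^ (n + 1 + k) :=
              pow_le_pow_right₀ (by norm_num) (by omega)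
            exact mul_le_mul_of_nonneg_right this (by positivity)
    calc Real.exp (-(c₀ * u ^ s)) * (u ^ k * (1 + u) ^ (n + 1))
        ≤ Real.exp (-(c₀ * u ^ s)) * ((2 : ℝ) ^ (n + 1 + k) * u ^ (n + 1 + k)) := by
          gcongr
      _ = (2 : ℝ) ^ (n + 1 + k) * ((u ^ s) ^ q * Real.exp (-c₀ * u ^ s)) := by
          rw [hpow, neg_mul]; ring

lemma aux_integrable (n k : ℕ) (c₀ s : ℝ) (hc₀ : 0 < c₀) (hs : 0 < s) :
    Integrable (fun ξ : EuclideanSpace ℝ (Fin n) =>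
      Real.exp (-(c₀ * ‖ξ‖ ^ s)) * ‖ξ‖ ^ k) := by
  obtain ⟨R, hR1, hR⟩ : ∃ R : ℝ, 1 ≤ R ∧ ∀ u : ℝ, R ≤ u →
      Real.exp (-(c₀ * u ^ s)) * (u ^ k * (1 + u) ^ (n + 1)) ≤ 1 := by
    have := (aux_tendsto n k c₀ s hc₀ hs).eventually_lt_const (by norm_num : (0:ℝ) < 1)
    rw [eventually_atTop] at this
    obtain ⟨R, hR⟩ := this
    exact ⟨max R 1, le_max_right _ _,
      fun u hu => (hR u (le_trans (le_max_left _ _) hu)).le⟩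
  set h : EuclideanSpace ℝ (Fin n) → ℝ :=
    fun ξ => Real.exp (-(c₀ * ‖ξ‖ ^ s)) * (‖ξ‖ ^ k * (1 + ‖ξ‖) ^ (n + 1)) with hh
  have hcont : Continuous h := by
    have hns : Continuous fun ξ : EuclideanSpace ℝ (Fin n) => ‖ξ‖ ^ s :=
      continuous_norm.rpow_const (fun x => Or.inr hs.le)
    exact (Real.continuous_exp.comp ((continuous_const.mul hns).neg)).mul
      ((continuous_norm.pow k).mul ((continuous_const.add continuous_norm).pow (n + 1)))
  obtain ⟨x₀, -, hx₀⟩ := (isCompact_closedBall (0 : EuclideanSpace ℝ (Fin n)) R).exists_isMaxOn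
    ⟨0, mem_closedBall_self (le_trans zero_le_one hR1)⟩ hcont.continuousOn
  set M : ℝ := max (h x₀) 1 with hM
  have hMh : ∀ ξ, h ξ ≤ M := by
    intro ξ
    rcases le_or_gt ‖ξ‖ R with hle | hlt
    · exact le_trans (hx₀ (mem_closedBall_zero_iff.2 hle)) (le_max_left _ _)
    · exact le_trans (hR ‖ξ‖ hlt.le) (le_max_right _ _)
  have hfin : (Module.finrank ℝ (EuclideanSpace ℝ (Fin n)) : ℝ) < ((n + 1 : ℕ) : ℝ) := by
    rw [finrank_euclideanSpace_fin]; exact_mod_cast Nat.lt_succ_self n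
  have hmain : Integrable (fun ξ : EuclideanSpace ℝ (Fin n) =>
      Real.exp (-(c₀ * ‖ξ‖ ^ s) * 1) * ‖ξ‖ ^ k) := by
    refine ((integrable_one_add_norm (E := EuclideanSpace ℝ (Fin n))
        (r := ((n + 1 : ℕ) : ℝ)) hfin).const_mul M).mono'
      (aux_cont c₀ s 1 hs k).aestronglyMeasurable
      (Filter.Eventually.of_forall fun ξ => ?_)
    have hpos : (0:ℝ) < (1 + ‖ξ‖) ^ (n + 1) := by positivity
    have hrw : (1 + ‖ξ‖) ^ (-((n + 1 : ℕ) : ℝ)) = ((1 + ‖ξ‖) ^ (n + 1) : ℝ)⁻¹ := by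
      rw [Real.rpow_neg (by positivity), Real.rpow_natCast]
    rw [Real.norm_eq_abs, abs_of_nonneg (by positivity), hrw, mul_one, ← div_eq_mul_inv,
      le_div_iff₀ hpos]
    calc Real.exp (-(c₀ * ‖ξ‖ ^ s)) * ‖ξ‖ ^ k * (1 + ‖ξ‖) ^ (n + 1) = h ξ := by
          rw [hh]; ring
      _ ≤ M := hMh ξ
  simpa using hmain

lemma aux_scaling (n k : ℕ) (c₀ s : ℝ) (hc₀ : 0 < c₀) (hs : 0 < s) (t : ℝ) (ht : 1 ≤ t) :
    ∫ ξ : EuclideanSpace ℝ (Fin n), Real.exp (-(c₀ * ‖ξ‖ ^ s) * t) * ‖ξ‖ ^ k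
      = t ^ (-((n : ℝ) + k) / s) *
        ∫ ξ : EuclideanSpace ℝ (Fin n), Real.exp (-(c₀ * ‖ξ‖ ^ s)) * ‖ξ‖ ^ k := by
  have ht0 : (0 : ℝ) < t := lt_of_lt_of_le one_pos ht
  set lam : ℝ := t ^ (-(1/s)) with hlam
  have hlam0 : 0 < lam := Real.rpow_pos_of_pos ht0 _
  have hlams : lam ^ s = t⁻¹ := by
    rw [hlam, ← Real.rpow_mul ht0.le, neg_mul, one_div,
      inv_mul_cancel₀ hs.ne', Real.rpow_neg_one]
  have key : ∀ x : EuclideanSpace ℝ (Fin n),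
      Real.exp (-(c₀ * ‖lam • x‖ ^ s) * t) * ‖lam • x‖ ^ k
        = lam ^ k * (Real.exp (-(c₀ * ‖x‖ ^ s)) * ‖x‖ ^ k) := by
    intro x
    have hn : ‖lam • x‖ = lam * ‖x‖ := by
      rw [norm_smul, Real.norm_eq_abs, abs_of_pos hlam0]
    have harg : -(c₀ * (t⁻¹ * ‖x‖ ^ s)) * t = -(c₀ * ‖x‖ ^ s) := by field_simp
    rw [hn, Real.mul_rpow hlam0.le (norm_nonneg x), hlams, mul_pow, harg]
    ring
  have hcs := Measure.integral_comp_smul (volume : Measure (EuclideanSpace ℝ (Fin n)))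
    (fun ξ => Real.exp (-(c₀ * ‖ξ‖ ^ s) * t) * ‖ξ‖ ^ k) lam
  simp only [key, finrank_euclideanSpace_fin, smul_eq_mul] at hcs
  rw [MeasureTheory.integral_const_mul] at hcs
  have habs : |((lam : ℝ) ^ n)⁻¹| = (lam ^ n)⁻¹ := abs_of_pos (by positivity)
  rw [habs] at hcs
  have hmain : ∫ ξ : EuclideanSpace ℝ (Fin n), Real.exp (-(c₀ * ‖ξ‖ ^ s) * t) * ‖ξ‖ ^ k
      = lam ^ (n + k) *
        ∫ ξ : EuclideanSpace ℝ (Fin n), Real.exp (-(c₀ * ‖ξ‖ ^ s)) * ‖ξ‖ ^ k := by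
    have h2 : lam ^ n * (lam ^ k *
        ∫ ξ : EuclideanSpace ℝ (Fin n), Real.exp (-(c₀ * ‖ξ‖ ^ s)) * ‖ξ‖ ^ k)
        = lam ^ n * ((lam ^ n)⁻¹ *
        ∫ ξ : EuclideanSpace ℝ (Fin n), Real.exp (-(c₀ * ‖ξ‖ ^ s) * t) * ‖ξ‖ ^ k) := by
      rw [hcs]
    rw [← mul_assoc, ← mul_assoc, mul_inv_cancel₀ (by positivity : (lam:ℝ) ^ n ≠ 0),
      one_mul] at h2
    rw [pow_add]
    exact h2.symm.trans (by ring)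
  rw [hmain]
  congr 1
  rw [hlam, ← Real.rpow_natCast (t ^ (-(1/s))) (n + k), ← Real.rpow_mul ht0.le]
  congr 1
  push_cast
  ring

lemma aux_intOn (n k : ℕ) (c₀ s ε : ℝ) (hc₀ : 0 < c₀) (hs : 0 < s) (hε : 0 < ε)
    (t : ℝ) (ht : 0 ≤ t) :
    IntegrableOn (fun ξ : EuclideanSpace ℝ (Fin n) =>
      Real.exp (-(c₀ * ‖ξ‖ ^ s) * t) * ‖ξ‖ ^ k) (ball 0 ε) := by
  refine Measure.integrableOn_of_bounded (M := ε ^ k) measure_ball_lt_top.ne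
    (aux_cont c₀ s t hs k).aestronglyMeasurable ?_
  filter_upwards [ae_restrict_mem measurableSet_ball] with ξ hξ
  have h1 : Real.exp (-(c₀ * ‖ξ‖ ^ s) * t) ≤ 1 := by
    apply Real.exp_le_one_iff.2
    have : 0 ≤ c₀ * ‖ξ‖ ^ s := by positivity
    nlinarith
  have h2 : ‖ξ‖ ^ k ≤ ε ^ k :=
    pow_le_pow_left₀ (norm_nonneg _) (le_of_lt (mem_ball_zero_iff.1 hξ)) k
  rw [Real.norm_eq_abs, abs_of_nonneg (by positivity)]
  calc Real.exp (-(c₀ * ‖ξ‖ ^ s) * t) * ‖ξ‖ ^ k ≤ 1 * (ε ^ k) :=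
        mul_le_mul h1 h2 (by positivity) zero_le_one
    _ = ε ^ k := one_mul _

lemma aux_key (n k : ℕ) (c₀ s ε : ℝ) (hc₀ : 0 < c₀) (hs : 0 < s) (hε : 0 < ε) :
    ∃ C₁ : ℝ, 0 ≤ C₁ ∧ ∀ t : ℝ, 0 ≤ t →
      (∫ ξ in ball (0 : EuclideanSpace ℝ (Fin n)) ε,
          Real.exp (-(c₀ * ‖ξ‖ ^ s) * t) * ‖ξ‖ ^ k)
        ≤ C₁ * (1 + t) ^ (-((n : ℝ) + k) / s) := by
  set p : ℝ := ((n : ℝ) + k) / s with hp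
  have hp0 : 0 ≤ p := div_nonneg (by positivity) hs.le
  set J : ℝ := ∫ ξ : EuclideanSpace ℝ (Fin n), Real.exp (-(c₀ * ‖ξ‖ ^ s)) * ‖ξ‖ ^ k with hJ
  have hJ0 : 0 ≤ J := integral_nonneg (fun ξ => by positivity)
  set M₀ : ℝ := (volume (ball (0 : EuclideanSpace ℝ (Fin n)) ε)).toReal * ε ^ k with hM₀
  have hM₀0 : 0 ≤ M₀ := by positivity
  refine ⟨(M₀ + J) * 2 ^ p, by positivity, fun t ht => ?_⟩
  have h1t : (0 : ℝ) < 1 + t := by linarith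
  have hexp : -((n : ℝ) + k) / s = -p := by rw [hp, neg_div]
  rw [hexp]
  rcases le_or_gt t 1 with hle | hlt
  · -- small time
    have hI : (∫ ξ in ball (0 : EuclideanSpace ℝ (Fin n)) ε,
        Real.exp (-(c₀ * ‖ξ‖ ^ s) * t) * ‖ξ‖ ^ k) ≤ M₀ := by
      have hmono : ∀ ξ ∈ ball (0 : EuclideanSpace ℝ (Fin n)) ε,
          Real.exp (-(c₀ * ‖ξ‖ ^ s) * t) * ‖ξ‖ ^ k ≤ ε ^ k := by
        intro ξ hξ
        have h1 : Real.exp (-(c₀ * ‖ξ‖ ^ s) * t) ≤ 1 := by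
          apply Real.exp_le_one_iff.2
          have : 0 ≤ c₀ * ‖ξ‖ ^ s := by positivity
          nlinarith
        have h2 : ‖ξ‖ ^ k ≤ ε ^ k :=
          pow_le_pow_left₀ (norm_nonneg _) (le_of_lt (mem_ball_zero_iff.1 hξ)) k
        calc Real.exp (-(c₀ * ‖ξ‖ ^ s) * t) * ‖ξ‖ ^ k ≤ 1 * (ε ^ k) :=
              mul_le_mul h1 h2 (by positivity) zero_le_one
          _ = ε ^ k := one_mul _
      calc (∫ ξ in ball (0 : EuclideanSpace ℝ (Fin n)) ε,
            Real.exp (-(c₀ * ‖ξ‖ ^ s) * t) * ‖ξ‖ ^ k)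
          ≤ ∫ _ in ball (0 : EuclideanSpace ℝ (Fin n)) ε, ε ^ k :=
            setIntegral_mono_on (aux_intOn n k c₀ s ε hc₀ hs hε t ht)
              (integrableOn_const measure_ball_lt_top.ne) measurableSet_ball hmono
        _ = M₀ := by rw [setIntegral_const, smul_eq_mul, measureReal_def]
    have h2p : (2 : ℝ) ^ (-p) ≤ (1 + t) ^ (-p) :=
      Real.rpow_le_rpow_of_nonpos h1t (by linarith) (neg_nonpos.2 hp0)
    have h22 : (2:ℝ) ^ p * 2 ^ (-p) = 1 := by
      rw [← Real.rpow_add two_pos, add_neg_cancel, Real.rpow_zero]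
    have hC : (0:ℝ) ≤ (M₀ + J) * 2 ^ p := by positivity
    have hh := mul_le_mul_of_nonneg_left h2p hC
    have heq : (M₀ + J) * 2 ^ p * 2 ^ (-p) = M₀ + J := by
      rw [mul_assoc, h22, mul_one]
    have hh2 : M₀ + J ≤ (M₀ + J) * 2 ^ p * (1 + t) ^ (-p) := by
      calc M₀ + J = (M₀ + J) * 2 ^ p * 2 ^ (-p) := by rw [mul_assoc, h22, mul_one]
        _ ≤ (M₀ + J) * 2 ^ p * (1 + t) ^ (-p) := hh
    linarith
  · -- large time
    have ht1 : 1 ≤ t := hlt.le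
    have ht0 : (0 : ℝ) < t := lt_of_lt_of_le one_pos ht1
    -- global integrability for t ≥ 1
    have hint : Integrable (fun ξ : EuclideanSpace ℝ (Fin n) =>
        Real.exp (-(c₀ * ‖ξ‖ ^ s) * t) * ‖ξ‖ ^ k) := by
      refine (aux_integrable n k c₀ s hc₀ hs).mono'
        (aux_cont c₀ s t hs k).aestronglyMeasurable
        (Filter.Eventually.of_forall fun ξ => ?_)
      rw [Real.norm_eq_abs, abs_of_nonneg (by positivity)]
      have harg : -(c₀ * ‖ξ‖ ^ s) * t ≤ -(c₀ * ‖ξ‖ ^ s) := by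
        have h0 : 0 ≤ c₀ * ‖ξ‖ ^ s := by positivity
        nlinarith
      exact mul_le_mul_of_nonneg_right (Real.exp_le_exp.2 harg) (by positivity)
    have hIle : (∫ ξ in ball (0 : EuclideanSpace ℝ (Fin n)) ε,
        Real.exp (-(c₀ * ‖ξ‖ ^ s) * t) * ‖ξ‖ ^ k)
        ≤ ∫ ξ : EuclideanSpace ℝ (Fin n), Real.exp (-(c₀ * ‖ξ‖ ^ s) * t) * ‖ξ‖ ^ k :=
      setIntegral_le_integral hint (Filter.Eventually.of_forall fun ξ => by positivity)
    rw [aux_scaling n k c₀ s hc₀ hs t ht1] at hIle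
    have hpow : t ^ (-((n : ℝ) + k) / s) ≤ 2 ^ p * (1 + t) ^ (-p) := by
      have h2 : ((1 + t) / 2 : ℝ) ≤ t := by linarith
      have h2pos : (0 : ℝ) < (1 + t) / 2 := by linarith
      have := Real.rpow_le_rpow_of_nonpos h2pos h2 (neg_nonpos.2 hp0)
      calc t ^ (-((n : ℝ) + k) / s) = t ^ (-p) := by rw [hexp]
        _ ≤ ((1 + t) / 2) ^ (-p) := this
        _ = (1 + t) ^ (-p) / 2 ^ (-p) := Real.div_rpow h1t.le two_pos.le (-p)
        _ = 2 ^ p * (1 + t) ^ (-p) := by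
            rw [Real.rpow_neg two_pos.le p, div_eq_mul_inv, inv_inv]; ring
    calc (∫ ξ in ball (0 : EuclideanSpace ℝ (Fin n)) ε,
          Real.exp (-(c₀ * ‖ξ‖ ^ s) * t) * ‖ξ‖ ^ k)
        ≤ t ^ (-((n : ℝ) + k) / s) * J := hIle
      _ ≤ (2 ^ p * (1 + t) ^ (-p)) * J := by
          apply mul_le_mul_of_nonneg_right hpow hJ0
      _ ≤ (M₀ + J) * 2 ^ p * (1 + t) ^ (-p) := by
          have h1p : (0:ℝ) ≤ (1 + t) ^ (-p) := Real.rpow_nonneg h1t.le _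
          have h2p : (0:ℝ) ≤ (2:ℝ) ^ p := Real.rpow_nonneg two_pos.le _
          nlinarith [mul_nonneg (mul_nonneg hM₀0 h2p) h1p]

lemma aux_coord {n : ℕ} (ξ : EuclideanSpace ℝ (Fin n)) (i : Fin n) : |ξ i| ≤ ‖ξ‖ := by
  rw [EuclideanSpace.norm_eq, ← Real.sqrt_sq_eq_abs]
  apply Real.sqrt_le_sqrt
  have := Finset.single_le_sum (f := fun j => ‖ξ j‖ ^ 2)
    (fun j _ => by positivity) (Finset.mem_univ i)
  simpa [Real.norm_eq_abs, sq_abs] using this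

theorem stmt_19 (n : ℕ) (φ : EuclideanSpace ℝ (Fin n) → ℝ) (hφ : Continuous φ)
    (s c₀ ε : ℝ) (hs : 0 < s) (hc₀ : 0 < c₀) (hε : 0 < ε)
    (hlow : ∀ ξ ∈ Metric.ball (0 : EuclideanSpace ℝ (Fin n)) ε, c₀ * ‖ξ‖ ^ s ≤ φ ξ)
    (a : EuclideanSpace ℝ (Fin n) → ℂ) (A : ℝ) (ha : ∀ ξ, ‖a ξ‖ ≤ A)
    (α : Fin n → ℕ) :
    ∃ C : ℝ, ∀ t : ℝ, 0 ≤ t → ∀ g : EuclideanSpace ℝ (Fin n) → ℂ, ∀ G : ℝ,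
      Measurable g → (∀ ξ, ‖g ξ‖ ≤ G) →
      ∫ ξ in Metric.ball (0 : EuclideanSpace ℝ (Fin n)) ε,
          Real.exp (-(φ ξ) * t) * |∏ i, ξ i ^ (α i)| * ‖a ξ‖ * ‖g ξ‖
        ≤ C * (1 + t) ^ (-((n : ℝ) + (∑ i, α i : ℕ)) / s) * G := by
  obtain ⟨C₁, hC₁0, hC₁⟩ := aux_key n (∑ i, α i) c₀ s ε hc₀ hs hε
  refine ⟨C₁ * A, fun t ht g G hg hG => ?_⟩
  have hA0 : 0 ≤ A := le_trans (norm_nonneg _) (ha 0)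
  have hG0 : 0 ≤ G := le_trans (norm_nonneg _) (hG 0)
  have h1t : (0 : ℝ) < 1 + t := by linarith
  set k : ℕ := ∑ i, α i with hk
  have step1 : (∫ ξ in ball (0 : EuclideanSpace ℝ (Fin n)) ε,
      Real.exp (-(φ ξ) * t) * |∏ i, ξ i ^ (α i)| * ‖a ξ‖ * ‖g ξ‖)
      ≤ ∫ ξ in ball (0 : EuclideanSpace ℝ (Fin n)) ε,
        (Real.exp (-(c₀ * ‖ξ‖ ^ s) * t) * ‖ξ‖ ^ k) * (A * G) := by
    refine integral_mono_of_nonneg ?_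
      ((aux_intOn n k c₀ s ε hc₀ hs hε t ht).mul_const (A * G)) ?_
    · filter_upwards with ξ
      positivity
    · filter_upwards [ae_restrict_mem measurableSet_ball] with ξ hξ
      have he : Real.exp (-(φ ξ) * t) ≤ Real.exp (-(c₀ * ‖ξ‖ ^ s) * t) :=
        Real.exp_le_exp.2 (mul_le_mul_of_nonneg_right (neg_le_neg (hlow ξ hξ)) ht)
      have hprod : |∏ i, ξ i ^ (α i)| ≤ ‖ξ‖ ^ k := by
        calc |∏ i, ξ i ^ (α i)| = ∏ i, |ξ i| ^ (α i) := by
              rw [Finset.abs_prod]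
              exact Finset.prod_congr rfl fun i _ => abs_pow _ _
          _ ≤ ∏ i, ‖ξ‖ ^ (α i) := Finset.prod_le_prod (fun i _ => by positivity)
              (fun i _ => pow_le_pow_left₀ (abs_nonneg _) (aux_coord ξ i) _)
          _ = ‖ξ‖ ^ k := Finset.prod_pow_eq_pow_sum _ _ _
      have m1 : Real.exp (-(φ ξ) * t) * |∏ i, ξ i ^ (α i)|
          ≤ Real.exp (-(c₀ * ‖ξ‖ ^ s) * t) * ‖ξ‖ ^ k :=
        mul_le_mul he hprod (abs_nonneg _) (Real.exp_pos _).le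
      have m2 : Real.exp (-(φ ξ) * t) * |∏ i, ξ i ^ (α i)| * ‖a ξ‖
          ≤ Real.exp (-(c₀ * ‖ξ‖ ^ s) * t) * ‖ξ‖ ^ k * A :=
        mul_le_mul m1 (ha ξ) (norm_nonneg _) (by positivity)
      have m3 : Real.exp (-(φ ξ) * t) * |∏ i, ξ i ^ (α i)| * ‖a ξ‖ * ‖g ξ‖
          ≤ Real.exp (-(c₀ * ‖ξ‖ ^ s) * t) * ‖ξ‖ ^ k * A * G :=
        mul_le_mul m2 (hG ξ) (norm_nonneg _) (by positivity)
      calc Real.exp (-(φ ξ) * t) * |∏ i, ξ i ^ (α i)| * ‖a ξ‖ * ‖g ξ‖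
          ≤ Real.exp (-(c₀ * ‖ξ‖ ^ s) * t) * ‖ξ‖ ^ k * A * G := m3
        _ = (Real.exp (-(c₀ * ‖ξ‖ ^ s) * t) * ‖ξ‖ ^ k) * (A * G) := by ring
  refine step1.trans ?_
  rw [integral_mul_const]
  calc (∫ ξ in ball (0 : EuclideanSpace ℝ (Fin n)) ε,
        Real.exp (-(c₀ * ‖ξ‖ ^ s) * t) * ‖ξ‖ ^ k) * (A * G)
      ≤ (C₁ * (1 + t) ^ (-((n : ℝ) + k) / s)) * (A * G) :=
        mul_le_mul_of_nonneg_right (hC₁ t ht) (by positivity)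
    _ = C₁ * A * (1 + t) ^ (-((n : ℝ) + k) / s) * G := by ring
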